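/- arXiv:2012.00812 — 4 statements merged into one kernel-verified Lean document; each statement's English description precedes it below -/
import Mathlib

section
/- The Shapley value of the sum game is stable (belongs to the core): for every coalition S ⊆ N, Σ_{i ∈ S} φ_i(N, v_Σ) ≥ v_Σ(S) = Σ_{T ⊆ S} f(T), and Σ_{i ∈ N} φ_i(N, v_Σ) = v_Σ(N). -/
/-- The Shapley value of the sum game built from `f`: `φ_i = ∑_{S ∋ i} f(S)/|S|`. -/
noncomputable def shapleySum {α : Type*} [DecidableEq α] [Fintype α]
    (f : Finset α → ℝ) (i : α) : ℝ :=
  ∑ S ∈ (Finset.univ : Finset α).powerset.filter (fun S => i ∈ S), f S / S.card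

lemma shapleySum_sum {α : Type*} [DecidableEq α] [Fintype α]
    (f : Finset α → ℝ) (S : Finset α) :
    ∑ i ∈ S, shapleySum f i =
      ∑ T ∈ (Finset.univ : Finset α).powerset, ((S ∩ T).card : ℝ) * (f T / T.card) := by
  unfold shapleySum
  have h : ∀ i ∈ S, (∑ T ∈ (Finset.univ : Finset α).powerset.filter (fun T => i ∈ T), f T / T.card)
      = ∑ T ∈ (Finset.univ : Finset α).powerset, (if i ∈ T then f T / T.card else 0) := by
    intro i _
    rw [Finset.sum_filter]
  rw [Finset.sum_congr rfl h, Finset.sum_comm]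
  refine Finset.sum_congr rfl fun T _ => ?_
  rw [← Finset.sum_filter]
  have : S.filter (fun i => i ∈ T) = S ∩ T := by
    ext x; simp [Finset.mem_inter]
  rw [this, Finset.sum_const, nsmul_eq_mul]

lemma term_eq {α : Type*} [DecidableEq α] (f : Finset α → ℝ) (h0 : f ∅ = 0)
    (T : Finset α) : ((T.card : ℝ)) * (f T / T.card) = f T := by
  rcases T.eq_empty_or_nonempty with rfl | hT
  · simp [h0]
  · have : (T.card : ℝ) ≠ 0 := Nat.cast_ne_zero.mpr (Finset.card_ne_zero_of_mem hT.choose_spec)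
    field_simp

/-- The Shapley value of the sum game is stable: it is efficient and for every
coalition `S` the payoff of `S` is at least `v_Σ(S) = ∑_{T ⊆ S} f(T)`. -/
theorem shapleySum_stable {α : Type*} [DecidableEq α] [Fintype α]
    (f : Finset α → ℝ) (hf : ∀ T, 0 ≤ f T) (h0 : f ∅ = 0) :
    (∀ S : Finset α, ∑ T ∈ S.powerset, f T ≤ ∑ i ∈ S, shapleySum f i) ∧
      (∑ i : α, shapleySum f i =
        ∑ T ∈ (Finset.univ : Finset α).powerset, f T) := by
  constructor
  · intro S
    rw [shapleySum_sum]
    have hfil : (Finset.univ : Finset α).powerset.filter (fun T => T ⊆ S) = S.powerset := by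
      ext T; simp [Finset.mem_powerset]
    have h1 : ∑ T ∈ S.powerset, f T
        = ∑ T ∈ (Finset.univ : Finset α).powerset, (if T ⊆ S then f T else 0) := by
      rw [← Finset.sum_filter, hfil]
    rw [h1]
    refine Finset.sum_le_sum fun T _ => ?_
    by_cases hTS : T ⊆ S
    · rw [if_pos hTS, Finset.inter_eq_right.mpr hTS]
      exact le_of_eq (term_eq f h0 T).symm
    · rw [if_neg hTS]
      have := hf T
      have hc : (0:ℝ) ≤ ((S ∩ T).card : ℝ) := Nat.cast_nonneg _
      have hc2 : (0:ℝ) ≤ (T.card : ℝ) := Nat.cast_nonneg _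
      exact mul_nonneg hc (div_nonneg this hc2)
  · rw [show (∑ i : α, shapleySum f i) = ∑ i ∈ Finset.univ, shapleySum f i from rfl,
      shapleySum_sum]
    refine Finset.sum_congr rfl fun T _ => ?_
    rw [Finset.univ_inter]
    exact term_eq f h0 T
end

section
/- The Shapley value of the sum game satisfies the no-subsidizing property: if S* ⊆ N is an independent set of channels, i.e., f(S ∪ T) = 0 for all S ⊆ S* and all nonempty T ⊆ N∖S*, then Σ_{i ∈ S*} φ_i(N, v_Σ) = Σ_{T ⊆ S*} f(T). -/
/-- No-subsidizing property: if `S*` is an independent set of channels, i.e.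
`f(S ∪ T) = 0` for all `S ⊆ S*` and all nonempty `T ⊆ N∖S*`, then
`∑_{i ∈ S*} φ_i = ∑_{T ⊆ S*} f(T)`. -/
theorem shapleySum_noSubsidizing {α : Type*} [DecidableEq α] [Fintype α]
    (f : Finset α → ℝ) (hf : ∀ T, 0 ≤ f T) (h0 : f ∅ = 0)
    (Sstar : Finset α)
    (hind : ∀ S ⊆ Sstar, ∀ T ⊆ Finset.univ \ Sstar, T ≠ ∅ → f (S ∪ T) = 0) :
    ∑ i ∈ Sstar, shapleySum f i = ∑ T ∈ Sstar.powerset, f T := by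
  have hsum : ∀ S : Finset α,
      (∑ i ∈ Sstar, if i ∈ S then f S / S.card else 0) =
        (if S ⊆ Sstar then f S else 0) := by
    intro S
    rw [Finset.sum_ite_mem, Finset.sum_const, Finset.inter_comm]
    by_cases hS : S ⊆ Sstar
    · rw [if_pos hS, Finset.inter_eq_left.mpr hS]
      rcases eq_or_ne S ∅ with rfl | hne
      · simp [h0]
      · have hc : (S.card : ℝ) ≠ 0 := by
          exact_mod_cast Finset.card_ne_zero_of_mem (Finset.nonempty_of_ne_empty hne).choose_spec
        rw [nsmul_eq_mul, mul_div_assoc']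
        field_simp
    · rw [if_neg hS]
      have hfz : f S = 0 := by
        have hT : S \ Sstar ⊆ Finset.univ \ Sstar :=
          Finset.sdiff_subset_sdiff (Finset.subset_univ S) le_rfl
        have hTne : S \ Sstar ≠ ∅ := by
          intro h
          exact hS fun x hx => by
            by_contra hx'
            exact (Finset.eq_empty_iff_forall_notMem.mp h x)
              (Finset.mem_sdiff.mpr ⟨hx, hx'⟩)
        have := hind (S ∩ Sstar) Finset.inter_subset_right (S \ Sstar) hT hTne
        have heq : S ∩ Sstar ∪ S \ Sstar = S := by
          ext x; simp [Finset.mem_sdiff]; tauto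
        rwa [heq] at this
      simp [hfz]
  calc ∑ i ∈ Sstar, shapleySum f i
      = ∑ i ∈ Sstar, ∑ S ∈ (Finset.univ : Finset α).powerset,
          (if i ∈ S then f S / S.card else 0) := by
        refine Finset.sum_congr rfl fun i _ => ?_
        rw [shapleySum, Finset.sum_filter]
    _ = ∑ S ∈ (Finset.univ : Finset α).powerset,
          ∑ i ∈ Sstar, (if i ∈ S then f S / S.card else 0) := Finset.sum_comm
    _ = ∑ S ∈ (Finset.univ : Finset α).powerset, (if S ⊆ Sstar then f S else 0) := by
        exact Finset.sum_congr rfl fun S _ => hsum S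
    _ = ∑ T ∈ Sstar.powerset, f T := by
        rw [← Finset.sum_filter]
        refine Finset.sum_congr ?_ fun _ _ => rfl
        ext S
        simp [Finset.mem_powerset]
end

section
/- A bankruptcy problem (E, c) with claimant set N arises from an attribution problem if and only if Σ_{i∈N} c_i ≥ E ≥ max_{i∈N} c_i; that is, this condition is necessary and sufficient for the existence of a nonnegative set function f : 2^N → ℝ≥0 with f(∅)=0 such that E = Σ_{∅≠S⊆N} f(S) and c_i = Σ_{S⊆N, i∈S} f(S) for all i ∈ N. -/
open Finset

private lemma attribution_aux {α : Type*} [DecidableEq α] :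
    ∀ (N : Finset α) (E : ℝ) (c : α → ℝ), 0 < E → (∀ i ∈ N, 0 ≤ c i) →
      E ≤ ∑ i ∈ N, c i → (∀ i ∈ N, c i ≤ E) →
      ∃ f : Finset α → ℝ, (∀ S, 0 ≤ f S) ∧
        (∀ S, f S ≠ 0 → S.Nonempty ∧ S ⊆ N) ∧
        E = ∑ S ∈ N.powerset.erase ∅, f S ∧
        ∀ i ∈ N, c i = ∑ S ∈ N.powerset.filter (fun S => i ∈ S), f S := by
  intro N
  induction N using Finset.strongInduction with
  | _ N ih =>
    intro E c hE hc hsum hmax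
    have hNne : N.Nonempty := by
      rcases N.eq_empty_or_nonempty with h | h
      · subst h; simp at hsum; linarith
      · exact h
    obtain ⟨i0, hi0, hmin⟩ := N.exists_min_image c hNne
    by_cases hcase : (∑ i ∈ N, c i) - E ≤ ((N.card : ℝ) - 1) * c i0
    · -- base case: singletons plus the full set
      set t : ℝ := ((∑ i ∈ N, c i) - E) / ((N.card : ℝ) - 1) with ht
      have hd : (0:ℝ) ≤ (N.card : ℝ) - 1 := by
        have : 1 ≤ N.card := Finset.card_pos.mpr hNne
        have : (1:ℝ) ≤ (N.card : ℝ) := by exact_mod_cast this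
        linarith
      have ht0 : 0 ≤ t := div_nonneg (by linarith) hd
      have hsumE : ∑ i ∈ N, c i - ((N.card : ℝ) - 1) * t = E := by
        rcases eq_or_lt_of_le hd with h0 | h0
        · -- card = 1
          have hcard : N.card = 1 := by
            have : (N.card : ℝ) = 1 := by linarith
            exact_mod_cast this
          obtain ⟨j, hj⟩ := Finset.card_eq_one.mp hcard
          have hsum1 : ∑ i ∈ N, c i = c j := by rw [hj, Finset.sum_singleton]
          have hjN : j ∈ N := by rw [hj]; exact Finset.mem_singleton_self j
          have : c j ≤ E := hmax j hjN
          have : ∑ i ∈ N, c i = E := by rw [hsum1]; linarith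
          rw [this, ← h0]; ring
        · have : ((N.card : ℝ) - 1) * t = ∑ i ∈ N, c i - E := by
            rw [ht, mul_div_cancel₀]; linarith
          linarith
      have htle : ∀ i ∈ N, t ≤ c i := by
        intro i hi
        have h1 : t ≤ c i0 := by
          rcases eq_or_lt_of_le hd with h0 | h0
          · have : t = 0 := by rw [ht, ← h0, div_zero]
            rw [this]; exact hc i0 hi0
          · rw [ht, div_le_iff₀ h0]; linarith [hcase]
        exact le_trans h1 (hmin i hi)
      refine ⟨fun S => (if S = N then t else 0) +
        ∑ i ∈ N, (if S = {i} then c i - t else 0), ?_, ?_, ?_, ?_⟩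
      · intro S
        apply add_nonneg
        · split <;> simp [ht0]
        · apply Finset.sum_nonneg
          intro i hi
          split
          · linarith [htle i hi]
          · exact le_refl 0
      · intro S hS
        by_contra h
        apply hS
        have h1 : S ≠ N := by
          rintro rfl; exact h ⟨hNne, Finset.Subset.refl _⟩
        have h2 : ∀ i ∈ N, S ≠ {i} := by
          rintro i hi rfl
          exact h ⟨Finset.singleton_nonempty i, Finset.singleton_subset_iff.mpr hi⟩
        simp only [if_neg h1, zero_add]
        exact Finset.sum_eq_zero (fun i hi => if_neg (h2 i hi))
      · rw [Finset.sum_add_distrib]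
        have hNmem : N ∈ N.powerset.erase ∅ :=
          Finset.mem_erase.mpr ⟨Finset.nonempty_iff_ne_empty.mp hNne, Finset.mem_powerset_self N⟩
        rw [Finset.sum_ite_eq' _ N (fun _ => t), if_pos hNmem]
        rw [Finset.sum_comm]
        have hinner : ∀ i ∈ N, ∑ S ∈ N.powerset.erase ∅, (if S = {i} then c i - t else 0)
            = c i - t := by
          intro i hi
          rw [Finset.sum_ite_eq' _ ({i} : Finset α) (fun _ => c i - t), if_pos]
          exact Finset.mem_erase.mpr ⟨Finset.nonempty_iff_ne_empty.mp (Finset.singleton_nonempty i),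
            Finset.mem_powerset.mpr (Finset.singleton_subset_iff.mpr hi)⟩
        rw [Finset.sum_congr rfl hinner, Finset.sum_sub_distrib, Finset.sum_const,
          nsmul_eq_mul]
        rw [← hsumE]; ring
      · intro i hi
        rw [Finset.sum_add_distrib]
        have hNmem : N ∈ N.powerset.filter (fun S => i ∈ S) :=
          Finset.mem_filter.mpr ⟨Finset.mem_powerset_self N, hi⟩
        rw [Finset.sum_ite_eq' _ N (fun _ => t), if_pos hNmem]
        rw [Finset.sum_comm]
        have hinner : ∀ j ∈ N, ∑ S ∈ N.powerset.filter (fun S => i ∈ S),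
            (if S = {j} then c j - t else 0) = if j = i then c j - t else 0 := by
          intro j hj
          rw [Finset.sum_ite_eq' _ ({j} : Finset α) (fun _ => c j - t)]
          by_cases hji : j = i
          · subst hji
            rw [if_pos, if_pos rfl]
            exact Finset.mem_filter.mpr ⟨Finset.mem_powerset.mpr
              (Finset.singleton_subset_iff.mpr hj), Finset.mem_singleton_self j⟩
          · rw [if_neg, if_neg hji]
            intro hmem
            have := (Finset.mem_filter.mp hmem).2
            exact hji (Finset.mem_singleton.mp this).symm
        rw [Finset.sum_congr rfl hinner, Finset.sum_ite_eq' _ i (fun j => c j - t), if_pos hi]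
        ring
    · -- recursive case: peel off the minimum onto the full set
      push_neg at hcase
      have hm0 : 0 ≤ (c i0) := hc i0 hi0
      have hmE : (c i0) < E := by
        by_contra h
        push_neg at h
        have hall : ∀ i ∈ N, c i = E := by
          intro i hi
          have := hmin i hi
          have := hmax i hi
          linarith
        have : ∑ i ∈ N, c i = N.card * E := by
          rw [Finset.sum_congr rfl hall, Finset.sum_const, nsmul_eq_mul]
        have hmE' : (c i0) = E := le_antisymm (hmax i0 hi0) h
        rw [this, hmE'] at hcase
        have : ((N.card : ℝ) - 1) * E < (N.card : ℝ) * E - E := by linarith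
        linarith [this]
      set N' := N.erase i0 with hN'
      have hN'sub : N' ⊂ N := Finset.erase_ssubset hi0
      have hcard' : (N'.card : ℝ) = (N.card : ℝ) - 1 := by
        rw [hN', Finset.card_erase_of_mem hi0]
        have : 1 ≤ N.card := Finset.card_pos.mpr hNne
        push_cast [this]
        ring
      have hsumN' : ∑ i ∈ N', (c i - (c i0)) = (∑ i ∈ N, c i) - (N.card : ℝ) * (c i0) := by
        rw [Finset.sum_sub_distrib, Finset.sum_const, nsmul_eq_mul, hcard']
        rw [hN', Finset.sum_erase_eq_sub hi0]
        ring
      obtain ⟨f', hf'0, hf'supp, hf'E, hf'c⟩ :=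
        ih N' hN'sub (E - (c i0)) (fun i => c i - (c i0)) (by linarith)
          (fun i hi => by
            show 0 ≤ c i - c i0
            have := hmin i (Finset.mem_of_mem_erase hi); linarith)
          (by rw [hsumN']; nlinarith [hcase])
          (fun i hi => by
            show c i - c i0 ≤ E - c i0
            have := hmax i (Finset.mem_of_mem_erase hi); linarith)
      refine ⟨fun S => f' S + (if S = N then (c i0) else 0), ?_, ?_, ?_, ?_⟩
      · intro S
        apply add_nonneg (hf'0 S)
        split <;> simp [hm0]
      · intro S hS
        by_cases h : f' S = 0
        · have hSN : S = N := by
            by_contra hSN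
            apply hS
            simp only [h, if_neg hSN, add_zero]
          rw [hSN]; exact ⟨hNne, Finset.Subset.refl _⟩
        · obtain ⟨h1, h2⟩ := hf'supp S h
          exact ⟨h1, h2.trans (Finset.erase_subset i0 N)⟩
      · rw [Finset.sum_add_distrib]
        have hNmem : N ∈ N.powerset.erase ∅ :=
          Finset.mem_erase.mpr ⟨Finset.nonempty_iff_ne_empty.mp hNne, Finset.mem_powerset_self N⟩
        rw [Finset.sum_ite_eq' _ N (fun _ => (c i0)), if_pos hNmem]
        have hsub : N'.powerset.erase ∅ ⊆ N.powerset.erase ∅ := by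
          intro S hSmem
          rw [Finset.mem_erase, Finset.mem_powerset] at hSmem ⊢
          exact ⟨hSmem.1, hSmem.2.trans (Finset.erase_subset i0 N)⟩
        have heq : ∑ S ∈ N.powerset.erase ∅, f' S = ∑ S ∈ N'.powerset.erase ∅, f' S := by
          symm
          apply Finset.sum_subset hsub
          intro S hSmem hSnot
          by_contra h
          apply hSnot
          obtain ⟨h1, h2⟩ := hf'supp S h
          exact Finset.mem_erase.mpr ⟨Finset.nonempty_iff_ne_empty.mp h1, Finset.mem_powerset.mpr h2⟩
        rw [heq, ← hf'E]
        ring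
      · intro i hi
        rw [Finset.sum_add_distrib]
        have hNmem : N ∈ N.powerset.filter (fun S => i ∈ S) :=
          Finset.mem_filter.mpr ⟨Finset.mem_powerset_self N, hi⟩
        rw [Finset.sum_ite_eq' _ N (fun _ => (c i0)), if_pos hNmem]
        by_cases hii0 : i = i0
        · subst hii0
          have hzero : ∑ S ∈ N.powerset.filter (fun S => i ∈ S), f' S = 0 := by
            apply Finset.sum_eq_zero
            intro S hSmem
            by_contra h
            obtain ⟨_, h2⟩ := hf'supp S h
            have hiS : i ∈ S := (Finset.mem_filter.mp hSmem).2
            exact (Finset.notMem_erase i N) (h2 hiS)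
          rw [hzero]; linarith
        · have hiN' : i ∈ N' := Finset.mem_erase.mpr ⟨hii0, hi⟩
          have heq : ∑ S ∈ N.powerset.filter (fun S => i ∈ S), f' S
              = ∑ S ∈ N'.powerset.filter (fun S => i ∈ S), f' S := by
            symm
            apply Finset.sum_subset
            · intro S hSmem
              rw [Finset.mem_filter, Finset.mem_powerset] at hSmem ⊢
              exact ⟨hSmem.1.trans (Finset.erase_subset i0 N), hSmem.2⟩
            · intro S hSmem hSnot
              by_contra h
              apply hSnot
              obtain ⟨_, h2⟩ := hf'supp S h
              exact Finset.mem_filter.mpr ⟨Finset.mem_powerset.mpr h2,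
                (Finset.mem_filter.mp hSmem).2⟩
          rw [heq, ← hf'c i hiN']
          ring

/-- A bankruptcy problem `(E, c)` with nonnegative claims arises from an
attribution problem iff `∑ c_i ≥ E ≥ c_i` for every claimant `i`: this is
necessary and sufficient for a nonnegative set function `f` (with `f ∅ = 0`) with
`E = ∑_{∅≠S⊆N} f(S)` and `c_i = ∑_{S ∋ i} f(S)` to exist. -/
theorem attribution_bankruptcy_characterization {α : Type*} [DecidableEq α] [Fintype α]
    (E : ℝ) (c : α → ℝ) (hE : 0 < E) (hc : ∀ i, 0 ≤ c i) :
    (E ≤ ∑ i : α, c i ∧ ∀ i : α, c i ≤ E) ↔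
      ∃ f : Finset α → ℝ, (∀ S, 0 ≤ f S) ∧ f ∅ = 0 ∧
        E = ∑ S ∈ (Finset.univ : Finset α).powerset.erase ∅, f S ∧
        ∀ i : α, c i =
          ∑ S ∈ (Finset.univ : Finset α).powerset.filter (fun S => i ∈ S), f S := by
  constructor
  · rintro ⟨h1, h2⟩
    obtain ⟨f, hf0, hfsupp, hfE, hfc⟩ :=
      attribution_aux Finset.univ E c hE (fun i _ => hc i) h1 (fun i _ => h2 i)
    refine ⟨f, hf0, ?_, hfE, fun i => hfc i (Finset.mem_univ i)⟩
    by_contra h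
    exact absurd (hfsupp ∅ h).1.ne_empty (fun hh => hh rfl)
  · rintro ⟨f, hf0, hfempty, hfE, hfc⟩
    constructor
    · have key : ∀ S ∈ (Finset.univ : Finset α).powerset, (S.card : ℝ) * f S
          = ∑ i : α, (if i ∈ S then f S else 0) := by
        intro S _
        rw [Finset.sum_ite_mem, Finset.univ_inter, Finset.sum_const, nsmul_eq_mul]
      have h1 : ∑ i : α, c i = ∑ S ∈ (Finset.univ : Finset α).powerset, (S.card : ℝ) * f S := by
        rw [Finset.sum_congr rfl (fun i _ => hfc i)]
        simp_rw [Finset.sum_filter]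
        rw [Finset.sum_comm]
        exact Finset.sum_congr rfl (fun S hS => (key S hS).symm)
      have h2 : ∑ S ∈ (Finset.univ : Finset α).powerset.erase ∅, f S
          ≤ ∑ S ∈ (Finset.univ : Finset α).powerset, (S.card : ℝ) * f S := by
        calc ∑ S ∈ (Finset.univ : Finset α).powerset.erase ∅, f S
            ≤ ∑ S ∈ (Finset.univ : Finset α).powerset.erase ∅, (S.card : ℝ) * f S := by
              apply Finset.sum_le_sum
              intro S hS
              have hne : S ≠ ∅ := (Finset.mem_erase.mp hS).1
              have : 1 ≤ S.card := Finset.card_pos.mpr (Finset.nonempty_iff_ne_empty.mpr hne)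
              nlinarith [hf0 S, (by exact_mod_cast this : (1:ℝ) ≤ (S.card : ℝ))]
          _ ≤ ∑ S ∈ (Finset.univ : Finset α).powerset, (S.card : ℝ) * f S := by
              apply Finset.sum_le_sum_of_subset_of_nonneg (Finset.erase_subset _ _)
              intro S _ _
              exact mul_nonneg (Nat.cast_nonneg _) (hf0 S)
      rw [hfE, h1]
      exact h2
    · intro i
      rw [hfc i, hfE]
      apply Finset.sum_le_sum_of_subset_of_nonneg
      · intro S hS
        rw [Finset.mem_filter] at hS
        rw [Finset.mem_erase]
        exact ⟨Finset.nonempty_iff_ne_empty.mp ⟨i, hS.2⟩, hS.1⟩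
      · intro S _ _
        exact hf0 S
end

section
/- The CEL rule satisfies the irrelevant players property: if CEL_k(N,E,c) = 0 for some k ∈ N, then (E, c_{−k}) is still a bankruptcy problem (Σ_{i≠k} c_i ≥ E), and CEL_i(N∖{k}, E, c_{−k}) = CEL_i(N, E, c) for all i ≠ k. -/
open Finset

/-- Irrelevant players property of the CEL rule: if `CEL_k = max{0, c_k − λ} = 0`
for some claimant `k`, then the reduced problem `(E, c_{−k})` is still a
bankruptcy problem, and the CEL shares of the remaining claimants are unchanged. -/
theorem CEL_irrelevant_players {α : Type*} [DecidableEq α] [Fintype α]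
    (E : ℝ) (c : α → ℝ) (hE : 0 < E) (hc : ∀ i, 0 ≤ c i)
    (hsum : E ≤ ∑ i : α, c i)
    (lam : ℝ) (hlam : 0 ≤ lam)
    (hCEL : ∑ i : α, max 0 (c i - lam) = E)
    (k : α) (hk : max 0 (c k - lam) = 0)
    (lam' : ℝ) (hlam' : 0 ≤ lam')
    (hCEL' : ∑ i ∈ Finset.univ.erase k, max 0 (c i - lam') = E) :
    (E ≤ ∑ i ∈ Finset.univ.erase k, c i) ∧
      ∀ i ∈ Finset.univ.erase k, max 0 (c i - lam') = max 0 (c i - lam) := by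
  have herase : ∑ i ∈ Finset.univ.erase k, max 0 (c i - lam) = E := by
    have := Finset.sum_erase (f := fun i => max 0 (c i - lam)) Finset.univ hk
    rw [this, hCEL]
  constructor
  · calc E = ∑ i ∈ Finset.univ.erase k, max 0 (c i - lam) := herase.symm
      _ ≤ ∑ i ∈ Finset.univ.erase k, c i := by
          apply Finset.sum_le_sum
          intro i _
          exact max_le (hc i) (by linarith [hlam])
  · rcases le_total lam' lam with h | h
    · have hle : ∀ i ∈ Finset.univ.erase k, max 0 (c i - lam) ≤ max 0 (c i - lam') := by
        intro i _; exact max_le_max le_rfl (by linarith)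
      have := (Finset.sum_eq_sum_iff_of_le hle).mp (by rw [herase, hCEL'])
      intro i hi; exact (this i hi).symm
    · have hle : ∀ i ∈ Finset.univ.erase k, max 0 (c i - lam') ≤ max 0 (c i - lam) := by
        intro i _; exact max_le_max le_rfl (by linarith)
      have := (Finset.sum_eq_sum_iff_of_le hle).mp (by rw [herase, hCEL'])
      intro i hi; exact this i hi
end
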